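/- Adding an event to an existing part strictly increases graph entropy when there are at least two parts: if n : Fin k → ℕ is a partition with k ≥ 2 parts, all of size at least 1, j : Fin k is any index, and n' agrees with n except that n' j = n j + 1, then E(n') > E(n). -/

import Mathlib

/-- Graph entropy of a partition with part sizes `n i`:
`E(n) = N·log N − Σ_i (n i)·log(n i)` where `N = Σ_i n i`. -/
noncomputable def graphEntropy {k : ℕ} (n : Fin k → ℕ) : ℝ :=
  (∑ i, (n i : ℝ)) * Real.log (∑ i, (n i : ℝ)) -
    ∑ i, (n i : ℝ) * Real.log (n i)

/-- The function `f(x) = (x+1)·log(x+1) − x·log x` is strictly monotone on `[1, ∞)`. -/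
lemma aux_strictMonoOn :
    StrictMonoOn (fun x : ℝ => (x + 1) * Real.log (x + 1) - x * Real.log x)
      (Set.Ici (1 : ℝ)) := by
  apply strictMonoOn_of_deriv_pos (convex_Ici 1)
  · exact ((Real.continuous_mul_log.comp (continuous_add_right 1)).sub
      Real.continuous_mul_log).continuousOn
  · intro x hx
    rw [interior_Ici] at hx
    have hx0 : (0 : ℝ) < x := lt_trans one_pos hx
    have h1 : HasDerivAt (fun x : ℝ => (x + 1) * Real.log (x + 1) - x * Real.log x)
        ((Real.log (x + 1) + 1) * 1 - (Real.log x + 1)) x := by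
      have ha : HasDerivAt (fun x : ℝ => (x + 1) * Real.log (x + 1))
          ((Real.log (x + 1) + 1) * 1) x := by
        have := (Real.hasDerivAt_mul_log (x := x + 1) (by positivity)).comp x
          ((hasDerivAt_id x).add_const 1)
        exact this
      exact ha.sub (Real.hasDerivAt_mul_log hx0.ne')
    rw [h1.deriv]
    have : Real.log x < Real.log (x + 1) := Real.log_lt_log hx0 (by linarith)
    linarith

/-- Adding an event to an existing part strictly increases graph entropy when
there are at least two parts: if `n` has `k ≥ 2` parts, all of size at least 1,
and `n'` agrees with `n` except that `n' j = n j + 1`, then `E(n') > E(n)`. -/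
theorem graphEntropy_update_lt (k : ℕ) (hk : 2 ≤ k) (n : Fin k → ℕ)
    (hn : ∀ i, 1 ≤ n i) (j : Fin k) (n' : Fin k → ℕ)
    (hj : n' j = n j + 1) (hne : ∀ i, i ≠ j → n' i = n i) :
    graphEntropy n' > graphEntropy n := by
  have hupd : n' = Function.update n j (n j + 1) := by
    funext i
    by_cases hij : i = j
    · subst hij; simp [hj]
    · simp [Function.update_of_ne hij, hne i hij]
  subst hupd
  set N : ℕ := ∑ i, n i with hN
  set m : ℕ := n j with hm
  have herase : N = m + ∑ i ∈ Finset.univ.erase j, n i :=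
    (Finset.add_sum_erase _ _ (Finset.mem_univ j)).symm
  -- sums over the updated function
  have hsum0 : (∑ i, (Function.update n j (m + 1) i)) = N + 1 := by
    rw [Finset.sum_update_of_mem (Finset.mem_univ j),
      Finset.sdiff_singleton_eq_erase]
    omega
  have hsum1 : (∑ i, ((Function.update n j (m + 1) i : ℕ) : ℝ)) = (N : ℝ) + 1 := by
    rw [← Nat.cast_sum, hsum0]; push_cast; ring
  have hsum2 : (∑ i, ((Function.update n j (m + 1) i : ℕ) : ℝ) *
      Real.log (Function.update n j (m + 1) i)) =
      (∑ i, (n i : ℝ) * Real.log (n i))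
        + (((m : ℝ) + 1) * Real.log ((m : ℝ) + 1) - (m : ℝ) * Real.log m) := by
    have h1 : (∑ i, ((Function.update n j (m + 1) i : ℕ) : ℝ) *
        Real.log (Function.update n j (m + 1) i)) =
        ((m : ℝ) + 1) * Real.log ((m : ℝ) + 1)
          + ∑ i ∈ Finset.univ.erase j, (n i : ℝ) * Real.log (n i) := by
      have heq : (fun i => ((Function.update n j (m + 1) i : ℕ) : ℝ) *
          Real.log (Function.update n j (m + 1) i)) =
          Function.update (fun i => (n i : ℝ) * Real.log (n i)) j
            (((m : ℝ) + 1) * Real.log ((m : ℝ) + 1)) := by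
        funext i
        by_cases hij : i = j
        · subst hij; simp only [Function.update_self]; push_cast; ring_nf
        · simp [Function.update_of_ne hij]
      rw [heq, Finset.sum_update_of_mem (Finset.mem_univ j),
        Finset.sdiff_singleton_eq_erase]
    have h2 : (∑ i, (n i : ℝ) * Real.log (n i)) =
        (m : ℝ) * Real.log m + ∑ i ∈ Finset.univ.erase j, (n i : ℝ) * Real.log (n i) :=
      (Finset.add_sum_erase _ _ (Finset.mem_univ j)).symm
    rw [h1, h2]; ring
  -- N ≥ m + 1
  have hNm : m + 1 ≤ N := by
    obtain ⟨i0, hi0⟩ : ∃ i0 : Fin k, i0 ≠ j := by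
      have : 1 < Fintype.card (Fin k) := by rw [Fintype.card_fin]; omega
      obtain ⟨i0, h⟩ := Fintype.exists_ne_of_one_lt_card this j
      exact ⟨i0, h⟩
    have h2 : 1 ≤ ∑ i ∈ Finset.univ.erase j, n i :=
      le_trans (hn i0) (Finset.single_le_sum (fun i _ => Nat.zero_le _)
        (Finset.mem_erase.mpr ⟨hi0, Finset.mem_univ i0⟩))
    omega
  have hm1 : 1 ≤ m := hn j
  -- reduce to monotonicity of f
  have key : ((m : ℝ) + 1) * Real.log ((m : ℝ) + 1) - (m : ℝ) * Real.log m <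
      ((N : ℝ) + 1) * Real.log ((N : ℝ) + 1) - (N : ℝ) * Real.log N := by
    have hmem1 : (m : ℝ) ∈ Set.Ici (1 : ℝ) :=
      Set.mem_Ici.mpr (by exact_mod_cast hm1)
    have hmem2 : (N : ℝ) ∈ Set.Ici (1 : ℝ) :=
      Set.mem_Ici.mpr (by exact_mod_cast le_trans (by omega : 1 ≤ m + 1) hNm)
    have hlt : (m : ℝ) < (N : ℝ) := by exact_mod_cast (by omega : m < N)
    exact aux_strictMonoOn hmem1 hmem2 hlt
  have hNr : (∑ i, ((n i : ℕ) : ℝ)) = (N : ℝ) := by rw [hN]; push_cast; rfl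
  unfold graphEntropy
  rw [hsum1, hsum2, hNr]
  linarith
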